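/- arXiv:1311.3914 — 4 statements merged into one kernel-verified Lean document; each statement's English description precedes it below -/
import Mathlib

section
/- Let X₁ = {(t,x,y) ∈ ℝ³ : t(t-2)(t-10) = x² + y² and 0 ≤ t ≤ 2} and X₂ = {(t,x,y) ∈ ℝ³ : t(t-2)(t-10) = x² + y² and t ≥ 10}, both with the subspace topology of ℝ³. Then: (i) X(ℝ) = X₁ ∪ X₂ and X₁ ∩ X₂ = ∅; (ii) X₁ and X₂ are each connected; (iii) X₁ is compact; (iv) X₂ is unbounded. In particular, X(ℝ) has exactly two connected components, one bounded and one unbounded. -/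
open Real Set

noncomputable def Frev (p : ℝ × ℝ) : ℝ × ℝ × ℝ :=
  (p.1, Real.sqrt (p.1*(p.1-2)*(p.1-10)) * Real.cos p.2,
        Real.sqrt (p.1*(p.1-2)*(p.1-10)) * Real.sin p.2)

lemma contFrev : Continuous Frev := by
  unfold Frev; fun_prop

lemma exists_angle (x y s : ℝ) (h : x^2 + y^2 = s) :
    ∃ θ ∈ Icc (-π) π, x = Real.sqrt s * Real.cos θ ∧ y = Real.sqrt s * Real.sin θ := by
  set z : ℂ := ⟨x, y⟩ with hzdef
  have habs : ‖z‖ = Real.sqrt s := by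
    rw [Complex.norm_def, Complex.normSq_mk, ← h]; ring_nf
  by_cases hz : z = 0
  · have hx : x = 0 := congrArg Complex.re hz
    have hy : y = 0 := congrArg Complex.im hz
    have hs : s = 0 := by rw [← h, hx, hy]; ring
    exact ⟨0, ⟨by linarith [Real.pi_pos], by linarith [Real.pi_pos]⟩,
      by simp [hx, hs], by simp [hy, hs]⟩
  · refine ⟨Complex.arg z, Ioc_subset_Icc_self (Complex.arg_mem_Ioc z), ?_, ?_⟩
    · rw [Complex.cos_arg hz, habs]
      have : Real.sqrt s ≠ 0 := by rw [← habs]; simpa using hz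
      field_simp; rfl
    · rw [Complex.sin_arg, habs]
      have : Real.sqrt s ≠ 0 := by rw [← habs]; simpa using hz
      field_simp; rfl

lemma image_eq (T : Set ℝ) (hT : ∀ t ∈ T, 0 ≤ t*(t-2)*(t-10)) :
    Frev '' (T ×ˢ Icc (-π) π) =
      {p : ℝ × ℝ × ℝ | p.1 * (p.1 - 2) * (p.1 - 10) = p.2.1 ^ 2 + p.2.2 ^ 2 ∧ p.1 ∈ T} := by
  ext ⟨t, x, y⟩
  constructor
  · rintro ⟨⟨u, θ⟩, ⟨hu, -⟩, heq⟩
    obtain ⟨rfl, rfl, rfl⟩ : u = t ∧ Real.sqrt (u*(u-2)*(u-10)) * Real.cos θ = x ∧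
        Real.sqrt (u*(u-2)*(u-10)) * Real.sin θ = y := by
      simpa [Frev, Prod.ext_iff] using heq
    refine ⟨?_, hu⟩
    have h0 := hT _ hu
    have := Real.sq_sqrt h0
    simp only
    nlinarith [Real.sin_sq_add_cos_sq θ]
  · rintro ⟨heq, ht⟩
    have h0 := hT _ ht
    obtain ⟨θ, hθ, hx, hy⟩ := exists_angle x y (t*(t-2)*(t-10)) heq.symm
    exact ⟨(t, θ), ⟨ht, hθ⟩, by simp [Frev, hx.symm, hy.symm]⟩

theorem real_points_two_components
    (X : Set (ℝ × ℝ × ℝ))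
    (hX : X = {p : ℝ × ℝ × ℝ |
      p.1 * (p.1 - 2) * (p.1 - 10) = p.2.1 ^ 2 + p.2.2 ^ 2})
    (X₁ : Set (ℝ × ℝ × ℝ))
    (hX₁ : X₁ = {p : ℝ × ℝ × ℝ |
      p.1 * (p.1 - 2) * (p.1 - 10) = p.2.1 ^ 2 + p.2.2 ^ 2 ∧ 0 ≤ p.1 ∧ p.1 ≤ 2})
    (X₂ : Set (ℝ × ℝ × ℝ))
    (hX₂ : X₂ = {p : ℝ × ℝ × ℝ |
      p.1 * (p.1 - 2) * (p.1 - 10) = p.2.1 ^ 2 + p.2.2 ^ 2 ∧ 10 ≤ p.1}) :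
    (X = X₁ ∪ X₂ ∧ X₁ ∩ X₂ = ∅) ∧
    (IsConnected X₁ ∧ IsConnected X₂) ∧
    IsCompact X₁ ∧
    ¬ Bornology.IsBounded X₂ := by
  have hpos1 : ∀ t ∈ Icc (0:ℝ) 2, 0 ≤ t*(t-2)*(t-10) := by
    rintro t ⟨h1, h2⟩
    nlinarith [mul_nonneg (mul_nonneg h1 (by linarith : (0:ℝ) ≤ 2 - t)) (by linarith : (0:ℝ) ≤ 10 - t)]
  have hpos2 : ∀ t ∈ Ici (10:ℝ), 0 ≤ t*(t-2)*(t-10) := by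
    rintro t h; simp only [mem_Ici] at h
    nlinarith [mul_nonneg (mul_nonneg (by linarith : (0:ℝ) ≤ t) (by linarith : (0:ℝ) ≤ t - 2)) (by linarith : (0:ℝ) ≤ t - 10)]
  have hI1 : X₁ = Frev '' (Icc (0:ℝ) 2 ×ˢ Icc (-π) π) := by
    rw [image_eq _ hpos1, hX₁]; rfl
  have hI2 : X₂ = Frev '' (Ici (10:ℝ) ×ˢ Icc (-π) π) := by
    rw [image_eq _ hpos2, hX₂]; rfl
  have hpi : -π ≤ π := by linarith [Real.pi_pos]
  refine ⟨⟨?_, ?_⟩, ⟨?_, ?_⟩, ?_, ?_⟩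
  · ext ⟨t, x, y⟩
    simp only [hX, hX₁, hX₂, mem_setOf_eq, mem_union]
    constructor
    · intro h
      rcases le_or_gt t 2 with h2 | h2
      · refine Or.inl ⟨h, ?_, h2⟩
        by_contra hneg
        push_neg at hneg
        nlinarith [sq_nonneg x, sq_nonneg y,
          mul_pos (mul_pos (by linarith : (0:ℝ) < -t) (by linarith : (0:ℝ) < 2 - t)) (by linarith : (0:ℝ) < 10 - t)]
      · refine Or.inr ⟨h, ?_⟩
        by_contra hneg
        push_neg at hneg
        nlinarith [sq_nonneg x, sq_nonneg y,
          mul_pos (mul_pos (by linarith : (0:ℝ) < t) (by linarith : (0:ℝ) < t - 2)) (by linarith : (0:ℝ) < 10 - t)]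
    · rintro (⟨h, -⟩ | ⟨h, -⟩) <;> exact h
  · ext ⟨t, x, y⟩
    simp only [hX₁, hX₂, mem_inter_iff, mem_setOf_eq, mem_empty_iff_false, iff_false]
    rintro ⟨⟨-, -, h2⟩, ⟨-, h10⟩⟩; linarith
  · rw [hI1]
    exact (((isConnected_Icc (by norm_num)).prod (isConnected_Icc hpi))).image _
      contFrev.continuousOn
  · rw [hI2]
    exact ((isConnected_Ici.prod (isConnected_Icc hpi))).image _ contFrev.continuousOn
  · rw [hI1]
    exact (isCompact_Icc.prod isCompact_Icc).image contFrev
  · intro hb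
    rw [isBounded_iff_forall_norm_le] at hb
    obtain ⟨r, hr⟩ := hb
    set t : ℝ := max 10 (r + 1) with ht
    have ht10 : (10:ℝ) ≤ t := le_max_left _ _
    have htr : r + 1 ≤ t := le_max_right _ _
    have h0 : 0 ≤ t*(t-2)*(t-10) :=
      mul_nonneg (mul_nonneg (by linarith) (by linarith)) (by linarith)
    have hmem : (t, Real.sqrt (t*(t-2)*(t-10)), (0:ℝ)) ∈ X₂ := by
      rw [hX₂]
      exact ⟨by simp [Real.sq_sqrt h0], ht10⟩
    have := hr _ hmem
    have h1 : ‖t‖ ≤ r :=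
      le_trans (norm_fst_le ((t, Real.sqrt (t*(t-2)*(t-10)), (0:ℝ)) : ℝ × ℝ × ℝ)) this
    rw [Real.norm_eq_abs, abs_of_nonneg (by linarith)] at h1
    linarith
end

section
/- Let p be a prime with p ≠ 2 and p ≠ 5, and let t, x, y ∈ ℤ_p satisfy t(t-2)(t-10) = x² + y². Then: (i) if t ≠ 0, there exist a, b ∈ ℚ_p with t = a² + b²; and (ii) if t ≠ 2, there exist a, b ∈ ℚ_p with t - 2 = a² + b². (Equivalently, the quaternion Hilbert symbols (t,-1)_p and (t-2,-1)_p are trivial for every p-adic integral point of the variety with tP(t) ≠ 0.) -/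
open PadicInt

section AuxLemmas

variable {p : ℕ} [hp : Fact p.Prime]

lemma my_toZMod_eq_zero_iff (z : ℤ_[p]) : toZMod z = 0 ↔ ‖z‖ < 1 := by
  rw [← RingHom.mem_ker, ker_toZMod, IsLocalRing.mem_maximalIdeal, mem_nonunits]

lemma my_norm_eq_one_of_toZMod_ne_zero {z : ℤ_[p]} (h : toZMod z ≠ 0) : ‖z‖ = 1 := by
  have h1 := z.norm_le_one
  have h2 : ¬ ‖z‖ < 1 := fun hlt => h ((my_toZMod_eq_zero_iff z).mpr hlt)
  exact le_antisymm h1 (not_lt.mp h2)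

lemma my_toZMod_ne_zero_of_norm_eq_one {z : ℤ_[p]} (h : ‖z‖ = 1) : toZMod z ≠ 0 := by
  intro h0
  have := (my_toZMod_eq_zero_iff z).mp h0
  rw [h] at this
  exact lt_irrefl 1 this

lemma my_norm_two_eq_one (hp2 : p ≠ 2) : ‖(2 : ℤ_[p])‖ = 1 := by
  have hle := (2 : ℤ_[p]).norm_le_one
  rcases lt_or_eq_of_le hle with hlt | heq
  · exfalso
    have h2 : ((2 : ℤ) : ℤ_[p]) = (2 : ℤ_[p]) := by norm_cast
    rw [← h2, PadicInt.norm_int_lt_one_iff_dvd] at hlt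
    have : (p : ℤ) ∣ 2 := hlt
    have hpd : p ∣ 2 := by exact_mod_cast this
    exact hp2 ((Nat.prime_dvd_prime_iff_eq hp.out (by norm_num)).mp hpd)
  · exact heq

/-- Hensel lifting of squares: if `z` is a unit and `z^2 ≡ u` mod `p`, then `u` is a square. -/
lemma my_sq_lift (hp2 : p ≠ 2) {u z : ℤ_[p]} (hz : ‖z‖ = 1) (hlt : ‖z ^ 2 - u‖ < 1) :
    ∃ r : ℤ_[p], r ^ 2 = u := by
  set F : Polynomial ℤ_[p] := Polynomial.X ^ 2 - Polynomial.C u with hF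
  have heval : ∀ w : ℤ_[p], F.eval w = w ^ 2 - u := by
    intro w; simp [hF]
  have hderiv : ∀ w : ℤ_[p], F.derivative.eval w = 2 * w := by
    intro w
    simp [hF, Polynomial.derivative_X_pow]
    norm_num
  have hnorm : ‖F.eval z‖ < ‖F.derivative.eval z‖ ^ 2 := by
    rw [heval, hderiv, norm_mul, my_norm_two_eq_one hp2, hz]
    simpa using hlt
  obtain ⟨r, hr, -, -, -⟩ := hensels_lemma hnorm
  refine ⟨r, ?_⟩
  rw [Polynomial.coe_aeval_eq_eval, heval] at hr
  exact sub_eq_zero.mp hr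

lemma my_unit_sum_sq_aux (hp2 : p ≠ 2) {u : ℤ_[p]} {a0 b0 : ZMod p}
    (hab : a0 ^ 2 + b0 ^ 2 = toZMod u) (ha0 : a0 ≠ 0) :
    ∃ a b : ℤ_[p], u = a ^ 2 + b ^ 2 := by
  set A : ℤ_[p] := (a0.val : ℤ_[p]) with hAdef
  set B : ℤ_[p] := (b0.val : ℤ_[p]) with hBdef
  have hA : toZMod A = a0 := by
    rw [hAdef, map_natCast, ZMod.natCast_val, ZMod.cast_id]
  have hB : toZMod B = b0 := by
    rw [hBdef, map_natCast, ZMod.natCast_val, ZMod.cast_id]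
  have hA1 : ‖A‖ = 1 := my_norm_eq_one_of_toZMod_ne_zero (by rw [hA]; exact ha0)
  have hlt : ‖A ^ 2 - (u - B ^ 2)‖ < 1 := by
    rw [← my_toZMod_eq_zero_iff]
    rw [map_sub, map_sub, map_pow, map_pow, hA, hB, ← hab]
    ring
  obtain ⟨r, hr⟩ := my_sq_lift hp2 hA1 hlt
  exact ⟨r, B, by rw [hr]; ring⟩

/-- Every unit of `ℤ_[p]`, `p` odd, is a sum of two squares of `p`-adic integers. -/
lemma my_unit_sum_sq (hp2 : p ≠ 2) {u : ℤ_[p]} (hu : ‖u‖ = 1) :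
    ∃ a b : ℤ_[p], u = a ^ 2 + b ^ 2 := by
  obtain ⟨a0, b0, hab⟩ := ZMod.sq_add_sq p (toZMod u)
  have hne : toZMod u ≠ 0 := my_toZMod_ne_zero_of_norm_eq_one hu
  have h0 : a0 ≠ 0 ∨ b0 ≠ 0 := by
    by_contra hcon
    push_neg at hcon
    rw [hcon.1, hcon.2] at hab
    simp at hab
    exact hne hab.symm
  rcases h0 with ha0 | hb0
  · exact my_unit_sum_sq_aux hp2 hab ha0
  · have hab' : b0 ^ 2 + a0 ^ 2 = toZMod u := by rw [← hab]; ring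
    exact my_unit_sum_sq_aux hp2 hab' hb0

/-- For `p ≡ 3 mod 4`, a nonzero sum of two squares has even valuation. -/
lemma my_sumsq_norm (hp3 : p % 4 = 3) {x y : ℤ_[p]} (hx : x ≠ 0) (hxy : ‖y‖ ≤ ‖x‖) :
    ∃ n : ℕ, ‖x ^ 2 + y ^ 2‖ = ‖(p : ℤ_[p]) ^ (2 * n)‖ := by
  set n := x.valuation with hn
  have hx' := unitCoeff_spec hx
  have hxnorm : ‖x‖ = ‖(p : ℤ_[p]) ^ n‖ := by
    conv_lhs => rw [hx']
    rw [norm_mul, norm_units, one_mul]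
  have hy : (p : ℤ_[p]) ^ n ∣ y := by
    rw [← Ideal.mem_span_singleton, ← norm_le_pow_iff_mem_span_pow]
    calc ‖y‖ ≤ ‖x‖ := hxy
      _ = ‖(p : ℤ_[p]) ^ n‖ := hxnorm
      _ = (p : ℝ) ^ (-(n : ℤ)) := norm_p_pow n
  obtain ⟨w, hw⟩ := hy
  have hu1 : ‖(unitCoeff hx : ℤ_[p])‖ = 1 := norm_units _
  have key : ‖(unitCoeff hx : ℤ_[p]) ^ 2 + w ^ 2‖ = 1 := by
    apply my_norm_eq_one_of_toZMod_ne_zero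
    intro hzero
    set a := toZMod (unitCoeff hx : ℤ_[p]) with hadef
    set b := toZMod w with hbdef
    have ha : a ≠ 0 := my_toZMod_ne_zero_of_norm_eq_one hu1
    have hab : a ^ 2 + b ^ 2 = 0 := by
      rw [hadef, hbdef, ← map_pow, ← map_pow, ← map_add]
      exact hzero
    have hsq : (b * a⁻¹) ^ 2 = -1 := by
      field_simp
      linear_combination hab
    have : IsSquare (-1 : ZMod p) := ⟨b * a⁻¹, by rw [← hsq]; ring⟩
    rw [ZMod.exists_sq_eq_neg_one_iff] at this
    exact this hp3
  refine ⟨n, ?_⟩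
  have hfact : x ^ 2 + y ^ 2 = (p : ℤ_[p]) ^ (2 * n) * ((unitCoeff hx : ℤ_[p]) ^ 2 + w ^ 2) := by
    conv_lhs => rw [hx', hw]
    ring
  rw [hfact, norm_mul, key, mul_one]

/-- Main workhorse for `p ≡ 3 mod 4`: if `s * r = x² + y²` with `r` a unit and `s ≠ 0`,
then `s` is a sum of two squares in `ℤ_[p]`. -/
lemma my_good (hp2 : p ≠ 2) (hp3 : p % 4 = 3) {s r x y : ℤ_[p]}
    (hr : ‖r‖ = 1) (heq : s * r = x ^ 2 + y ^ 2) (hs : s ≠ 0) :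
    ∃ a b : ℤ_[p], s = a ^ 2 + b ^ 2 := by
  obtain ⟨n, hn⟩ : ∃ n : ℕ, ‖x ^ 2 + y ^ 2‖ = ‖(p : ℤ_[p]) ^ (2 * n)‖ := by
    have hxy : x ≠ 0 ∨ y ≠ 0 := by
      by_contra hcon
      push_neg at hcon
      rw [hcon.1, hcon.2] at heq
      simp at heq
      rcases heq with h0 | h0
      · exact hs h0
      · rw [h0] at hr; simp at hr
    rcases le_total ‖y‖ ‖x‖ with hle | hle
    · have hx : x ≠ 0 := by
        intro h0
        rw [h0, norm_zero] at hle
        have : y = 0 := norm_le_zero_iff.mp hle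
        rcases hxy with h | h
        · exact h h0
        · exact h this
      exact my_sumsq_norm hp3 hx hle
    · have hy : y ≠ 0 := by
        intro h0
        rw [h0, norm_zero] at hle
        have : x = 0 := norm_le_zero_iff.mp hle
        rcases hxy with h | h
        · exact h this
        · exact h h0
      obtain ⟨n, hn⟩ := my_sumsq_norm hp3 hy hle
      exact ⟨n, by rw [add_comm] at hn; exact hn⟩
  have hsnorm : ‖s‖ = ‖(p : ℤ_[p]) ^ (2 * n)‖ := by
    have : ‖s * r‖ = ‖x ^ 2 + y ^ 2‖ := by rw [heq]
    rw [norm_mul, hr, mul_one] at this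
    rw [this, hn]
  have hdvd : (p : ℤ_[p]) ^ (2 * n) ∣ s := by
    rw [← Ideal.mem_span_singleton, ← norm_le_pow_iff_mem_span_pow, hsnorm, norm_p_pow]
  obtain ⟨w, hw⟩ := hdvd
  have hppow : ‖(p : ℤ_[p]) ^ (2 * n)‖ ≠ 0 := by
    rw [norm_p_pow]
    have hp0 : (0 : ℝ) < p := by exact_mod_cast (Fact.out : p.Prime).pos
    positivity
  have hwn : ‖w‖ = 1 := by
    have h1 : ‖s‖ = ‖(p : ℤ_[p]) ^ (2 * n)‖ * ‖w‖ := by rw [hw, norm_mul]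
    rw [hsnorm] at h1
    have h2 : ‖(p : ℤ_[p]) ^ (2 * n)‖ * 1 = ‖(p : ℤ_[p]) ^ (2 * n)‖ * ‖w‖ := by
      rw [mul_one, ← h1]
    exact (mul_left_cancel₀ hppow h2).symm
  obtain ⟨a, b, hab⟩ := my_unit_sum_sq hp2 hwn
  refine ⟨(p : ℤ_[p]) ^ n * a, (p : ℤ_[p]) ^ n * b, ?_⟩
  rw [hw, hab]
  ring

end AuxLemmas

theorem hilbert_symbol_trivial_at_good_primes
    (p : ℕ) [Fact p.Prime] (hp2 : p ≠ 2) (hp5 : p ≠ 5)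
    (t x y : ℤ_[p]) (h : t * (t - 2) * (t - 10) = x ^ 2 + y ^ 2) :
    (t ≠ 0 → ∃ a b : ℚ_[p], (t : ℚ_[p]) = a ^ 2 + b ^ 2) ∧
    (t ≠ 2 → ∃ a b : ℚ_[p], (t : ℚ_[p]) - 2 = a ^ 2 + b ^ 2) := by
  have hpp : p.Prime := Fact.out
  have hodd : p % 2 = 1 := Nat.odd_iff.mp (hpp.odd_of_ne_two hp2)
  have h44 : p % 4 % 2 = p % 2 := Nat.mod_mod_of_dvd p (by norm_num)
  have h4lt : p % 4 < 4 := Nat.mod_lt _ (by norm_num)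
  rcases (by omega : p % 4 = 1 ∨ p % 4 = 3) with h1 | h3
  · -- `p ≡ 1 mod 4`: `-1` is a square in `ℚ_[p]`, so everything is a sum of two squares.
    have hsq : IsSquare (-1 : ZMod p) := ZMod.exists_sq_eq_neg_one_iff.mpr (by omega)
    obtain ⟨s, hs⟩ := hsq
    have hs0 : s ≠ 0 := by
      intro h0
      rw [h0, mul_zero] at hs
      exact one_ne_zero (neg_eq_zero.mp hs)
    set A : ℤ_[p] := (s.val : ℤ_[p]) with hAdef
    have hA : toZMod A = s := by rw [hAdef, map_natCast, ZMod.natCast_val, ZMod.cast_id]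
    have hA1 : ‖A‖ = 1 := my_norm_eq_one_of_toZMod_ne_zero (by rw [hA]; exact hs0)
    have hlt : ‖A ^ 2 - (-1)‖ < 1 := by
      rw [← my_toZMod_eq_zero_iff, map_sub, map_pow, hA, map_neg, map_one, pow_two, ← hs]
      ring
    obtain ⟨i, hi⟩ := my_sq_lift hp2 hA1 hlt
    have hiq : (i : ℚ_[p]) ^ 2 = -1 := by
      have h' : ((i ^ 2 : ℤ_[p]) : ℚ_[p]) = ((-1 : ℤ_[p]) : ℚ_[p]) := by rw [hi]
      push_cast at h'
      exact h'
    have key : ∀ c : ℚ_[p], ∃ a b : ℚ_[p], c = a ^ 2 + b ^ 2 := by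
      intro c
      refine ⟨(c + 1) / 2, (i : ℚ_[p]) * (c - 1) / 2, ?_⟩
      linear_combination (-(c - 1) ^ 2 / 4) * hiq
    exact ⟨fun _ => key t, fun _ => key _⟩
  · -- `p ≡ 3 mod 4`
    have h2z : (2 : ZMod p) ≠ 0 := by
      have h' : ((2 : ℕ) : ZMod p) ≠ 0 := by
        rw [Ne, ZMod.natCast_eq_zero_iff]
        intro hd
        exact hp2 ((Nat.prime_dvd_prime_iff_eq hpp (by norm_num)).mp hd)
      exact_mod_cast h'
    have h10z : (10 : ZMod p) ≠ 0 := by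
      have h' : ((10 : ℕ) : ZMod p) ≠ 0 := by
        rw [Ne, ZMod.natCast_eq_zero_iff]
        intro hd
        have hd' : p ∣ 2 * 5 := (by norm_num : (10 : ℕ) = 2 * 5) ▸ hd
        rcases (Nat.Prime.dvd_mul hpp).mp hd' with hc | hc
        · exact hp2 ((Nat.prime_dvd_prime_iff_eq hpp (by norm_num)).mp hc)
        · exact hp5 ((Nat.prime_dvd_prime_iff_eq hpp (by norm_num)).mp hc)
      exact_mod_cast h'
    have h8z : (8 : ZMod p) ≠ 0 := by
      have h' : ((8 : ℕ) : ZMod p) ≠ 0 := by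
        rw [Ne, ZMod.natCast_eq_zero_iff]
        intro hd
        have hd' : p ∣ 2 ^ 3 := (by norm_num : (8 : ℕ) = 2 ^ 3) ▸ hd
        exact hp2 ((Nat.prime_dvd_prime_iff_eq hpp (by norm_num)).mp (hpp.dvd_of_dvd_pow hd'))
      exact_mod_cast h'
    constructor
    · -- part (i)
      intro ht
      by_cases hu : ‖t‖ = 1
      · obtain ⟨a, b, hab⟩ := my_unit_sum_sq hp2 hu
        refine ⟨a, b, ?_⟩
        have hc := congrArg (fun z : ℤ_[p] => (z : ℚ_[p])) hab
        push_cast at hc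
        exact hc
      · have ht0 : toZMod t = 0 :=
          (my_toZMod_eq_zero_iff t).mpr (lt_of_le_of_ne t.norm_le_one hu)
        have e1 : ‖t - 2‖ = 1 := by
          apply my_norm_eq_one_of_toZMod_ne_zero
          rw [map_sub, ht0, zero_sub, map_ofNat]
          exact neg_ne_zero.mpr h2z
        have e2 : ‖t - 10‖ = 1 := by
          apply my_norm_eq_one_of_toZMod_ne_zero
          rw [map_sub, ht0, zero_sub, map_ofNat]
          exact neg_ne_zero.mpr h10z
        have hr : ‖(t - 2) * (t - 10)‖ = 1 := by
          rw [norm_mul, e1, e2, mul_one]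
        obtain ⟨a, b, hab⟩ :=
          my_good hp2 h3 hr (show t * ((t - 2) * (t - 10)) = x ^ 2 + y ^ 2 by
            linear_combination h) ht
        refine ⟨a, b, ?_⟩
        have hc := congrArg (fun z : ℤ_[p] => (z : ℚ_[p])) hab
        push_cast at hc
        exact hc
    · -- part (ii)
      intro ht
      by_cases hu : ‖t - 2‖ = 1
      · obtain ⟨a, b, hab⟩ := my_unit_sum_sq hp2 hu
        refine ⟨a, b, ?_⟩
        have hc := congrArg (fun z : ℤ_[p] => (z : ℚ_[p])) hab
        push_cast at hc
        exact hc
      · have ht0 : toZMod (t - 2) = 0 :=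
          (my_toZMod_eq_zero_iff _).mpr (lt_of_le_of_ne (t - 2).norm_le_one hu)
        have ht2 : toZMod t = 2 := by
          rw [map_sub, map_ofNat, sub_eq_zero] at ht0
          exact ht0
        have e1 : ‖t‖ = 1 := by
          apply my_norm_eq_one_of_toZMod_ne_zero
          rw [ht2]
          exact h2z
        have e2 : ‖t - 10‖ = 1 := by
          apply my_norm_eq_one_of_toZMod_ne_zero
          rw [map_sub, ht2, map_ofNat]
          have : (2 : ZMod p) - 10 = -8 := by norm_num
          rw [this]
          exact neg_ne_zero.mpr h8z
        have hr : ‖t * (t - 10)‖ = 1 := by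
          rw [norm_mul, e1, e2, mul_one]
        have hs : t - 2 ≠ 0 := sub_ne_zero.mpr ht
        obtain ⟨a, b, hab⟩ :=
          my_good hp2 h3 hr (show (t - 2) * (t * (t - 10)) = x ^ 2 + y ^ 2 by
            linear_combination h) hs
        refine ⟨a, b, ?_⟩
        have hc := congrArg (fun z : ℤ_[p] => (z : ℚ_[p])) hab
        push_cast at hc
        exact hc
end

section
/- Let t, x, y ∈ ℤ satisfy t(t-2)(t-10) = x² + y² and t ≡ 1 (mod 8). Then t = 1. In particular, every integral point of the variety t(t-2)(t-10) = x² + y² whose t-coordinate is ≡ 1 (mod 8) lies on the bounded real component {0 ≤ t ≤ 2}. -/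
private lemma sq_mod_four (x : ℕ) : x ^ 2 % 4 = 0 ∨ x ^ 2 % 4 = 1 := by
  have h : x % 2 = 0 ∨ x % 2 = 1 := Nat.mod_two_eq_zero_or_one x
  rcases h with h | h
  · obtain ⟨m, hm⟩ : ∃ m, x = 2 * m := ⟨x / 2, by omega⟩
    left; subst hm
    have : (2 * m) ^ 2 = 4 * m ^ 2 := by ring
    rw [this]; omega
  · obtain ⟨m, hm⟩ : ∃ m, x = 2 * m + 1 := ⟨x / 2, by omega⟩
    right; subst hm
    have : (2 * m + 1) ^ 2 = 4 * (m ^ 2 + m) + 1 := by ring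
    rw [this]; omega

private lemma not_sum_two_sq_of_mod_four (n : ℕ) (hn : n % 4 = 3) :
    ¬ ∃ x y : ℕ, n = x ^ 2 + y ^ 2 := by
  rintro ⟨x, y, rfl⟩
  rcases sq_mod_four x with h1 | h1 <;> rcases sq_mod_four y with h2 | h2 <;> omega

theorem integral_point_one_mod_eight_on_bounded_component
    (t x y : ℤ) (h : t * (t - 2) * (t - 10) = x ^ 2 + y ^ 2)
    (ht : t ≡ 1 [ZMOD 8]) : t = 1 := by
  obtain ⟨k, hk⟩ : (8 : ℤ) ∣ t - 1 := (Int.ModEq.dvd ht.symm)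
  have hkt : t = 8 * k + 1 := by omega
  rcases lt_trichotomy k 0 with hneg | hzero | hpos
  · -- k ≤ -1 : LHS negative
    exfalso
    subst hkt
    have hk1 : k ≤ -1 := by omega
    have hP : (0:ℤ) < (64 * k ^ 2 - 1) * (9 - 8 * k) :=
      mul_pos (by nlinarith [sq_nonneg (k + 1)]) (by linarith)
    nlinarith [sq_nonneg x, sq_nonneg y]
  · omega
  · -- k ≥ 1
    exfalso
    rcases eq_or_lt_of_le (show (1:ℤ) ≤ k by omega) with h1 | h2
    · -- k = 1, t = 9, LHS = -63
      have ht9 : t = 9 := by omega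
      subst ht9; nlinarith [sq_nonneg x, sq_nonneg y]
    · -- k ≥ 2, t ≥ 17
      have hk2 : 2 ≤ k := by omega
      set a : ℕ := t.toNat with ha
      set b : ℕ := (t - 2).toNat with hb
      set c : ℕ := (t - 10).toNat with hc
      have hta : (a : ℤ) = t := Int.toNat_of_nonneg (by omega)
      have htb : (b : ℤ) = t - 2 := Int.toNat_of_nonneg (by omega)
      have htc : (c : ℤ) = t - 10 := Int.toNat_of_nonneg (by omega)
      have hab : a = b + 2 := by omega
      have hbc : b = c + 8 := by omega
      have hapos : a ≠ 0 := by omega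
      have hbpos : b ≠ 0 := by omega
      have hcpos : c ≠ 0 := by omega
      -- the product as a sum of two nat squares
      have hsum : a * b * c = x.natAbs ^ 2 + y.natAbs ^ 2 := by
        have : ((a * b * c : ℕ) : ℤ) = ((x.natAbs ^ 2 + y.natAbs ^ 2 : ℕ) : ℤ) := by
          push_cast
          rw [hta, htb, htc, sq_abs, sq_abs]
          exact h
        exact_mod_cast this
      -- b ≡ 3 mod 4
      have hb4 : b % 4 = 3 := by omega
      -- get a bad prime
      have hnot : ¬ ∀ q : ℕ, q.Prime → q % 4 = 3 → Even (padicValNat q b) := by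
        intro hall
        exact not_sum_two_sq_of_mod_four b hb4
          (Nat.eq_sq_add_sq_iff.mpr (fun {q} hq h3 => hall q (Nat.prime_of_mem_primeFactors hq) h3))
      push_neg at hnot
      obtain ⟨q, hq, hq3, hodd⟩ := hnot
      haveI : Fact q.Prime := ⟨hq⟩
      -- q divides b
      have hqb : q ∣ b := by
        by_contra hnd
        exact hodd (padicValNat.eq_zero_of_not_dvd hnd ▸ Even.zero)
      have hq2 : q ≠ 2 := by omega
      -- q doesn't divide a or c
      have hqa : ¬ q ∣ a := by
        intro hd
        have : q ∣ 2 := by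
          have := Nat.dvd_sub hd hqb
          simpa [hab] using this
        have hle := Nat.le_of_dvd (by norm_num) this
        omega
      have hqc : ¬ q ∣ c := by
        intro hd
        have : q ∣ 8 := by
          have := Nat.dvd_sub hqb hd
          simpa [hbc] using this
        have hle := Nat.le_of_dvd (by norm_num) this
        have h2le := hq.two_le
        interval_cases q <;> omega
      have heven : Even (padicValNat q (a * b * c)) :=
        Nat.eq_sq_add_sq_iff.mp ⟨x.natAbs, y.natAbs, hsum⟩ q
          (Nat.mem_primeFactors.mpr ⟨hq, (Dvd.dvd.mul_left hqb a).mul_right c,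
            Nat.mul_ne_zero (Nat.mul_ne_zero hapos hbpos) hcpos⟩) hq3
      rw [padicValNat.mul (Nat.mul_ne_zero hapos hbpos) hcpos,
        padicValNat.mul hapos hbpos,
        padicValNat.eq_zero_of_not_dvd hqa,
        padicValNat.eq_zero_of_not_dvd hqc] at heven
      simp at heven
      exact hodd heven
end

section
/- There do not exist integers t, x, y with t(t-2)(t-10) = x² + y², t ≡ 1 (mod 8), and t ≡ 5 (mod 25). (This is the integral-points content of the paper's counterexample showing that strong approximation with Brauer–Manin obstruction off ∞ fails for the variety t(t-2)(t-10) = x² + y²: the variety has an adelic point orthogonal to the Brauer group with |t-1|₂ ≤ 1/8 and |t-5|₅ ≤ 1/25, but no integral point satisfying these congruences.) -/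
theorem no_integral_point_with_congruences :
    ¬ ∃ t x y : ℤ, t * (t - 2) * (t - 10) = x ^ 2 + y ^ 2 ∧
      t ≡ 1 [ZMOD 8] ∧ t ≡ 5 [ZMOD 25] := by
  rintro ⟨t, x, y, heq, h8, h25⟩
  have h8' : t % 8 = 1 % 8 := h8
  have h25' : t % 25 = 5 % 25 := h25
  -- t ≡ 105 (mod 200), so t ≥ 105 or t ≤ -95
  have ht : t ≥ 105 ∨ t ≤ -95 := by omega
  have hx2 : (0:ℤ) ≤ x ^ 2 := sq_nonneg x
  have hy2 : (0:ℤ) ≤ y ^ 2 := sq_nonneg y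
  rcases ht with ht | ht
  · -- positive case: t ≥ 105
    set a : ℕ := t.toNat with ha
    set m : ℕ := (t - 2).toNat with hm
    set b : ℕ := (t - 10).toNat with hb
    have hca : (a : ℤ) = t := Int.toNat_of_nonneg (by omega)
    have hcm : (m : ℤ) = t - 2 := Int.toNat_of_nonneg (by omega)
    have hcb : (b : ℤ) = t - 10 := Int.toNat_of_nonneg (by omega)
    have hn : a * m * b = x.natAbs ^ 2 + y.natAbs ^ 2 := by
      have : ((a * m * b : ℕ) : ℤ) = ((x.natAbs ^ 2 + y.natAbs ^ 2 : ℕ) : ℤ) := by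
        push_cast
        rw [hca, hcm, hcb, sq_abs, sq_abs]
        exact heq
      exact_mod_cast this
    have hm4 : m % 4 = 3 := by omega
    have hm0 : m ≠ 0 := by omega
    have ha0 : a ≠ 0 := by omega
    have hb0 : b ≠ 0 := by omega
    -- there is a prime q ≡ 3 mod 4 with odd exponent in m
    have hq : ∃ q : ℕ, q.Prime ∧ q % 4 = 3 ∧ Odd (padicValNat q m) := by
      by_contra hcon
      push_neg at hcon
      obtain ⟨u, v, huv⟩ := Nat.eq_sq_add_sq_iff.mpr
        (fun {q} hq hq4 => Nat.not_odd_iff_even.mp (hcon q (Nat.prime_of_mem_primeFactors hq) hq4))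
      have hu : u ^ 2 % 4 = 0 ∨ u ^ 2 % 4 = 1 := by
        rcases Nat.even_or_odd u with ⟨c, rfl⟩ | ⟨c, rfl⟩
        · left; ring_nf; omega
        · right; ring_nf; omega
      have hv : v ^ 2 % 4 = 0 ∨ v ^ 2 % 4 = 1 := by
        rcases Nat.even_or_odd v with ⟨c, rfl⟩ | ⟨c, rfl⟩
        · left; ring_nf; omega
        · right; ring_nf; omega
      omega
    obtain ⟨q, hqp, hq4, hqodd⟩ := hq
    haveI : Fact q.Prime := ⟨hqp⟩
    -- q divides m
    have hqm : q ∣ m := by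
      by_contra hnd
      rw [padicValNat.eq_zero_of_not_dvd hnd] at hqodd
      exact (Nat.not_even_iff_odd.mpr hqodd) Even.zero
    have hqmZ : (q : ℤ) ∣ t - 2 := hcm ▸ Int.natCast_dvd_natCast.mpr hqm
    -- q does not divide a or b
    have hqa : ¬ q ∣ a := by
      intro hd
      have : (q : ℤ) ∣ t := hca ▸ Int.natCast_dvd_natCast.mpr hd
      have h2 : (q : ℤ) ∣ 2 := by
        have := dvd_sub this hqmZ
        simpa using this
      have : q ∣ 2 := by exact_mod_cast h2
      have := Nat.le_of_dvd (by norm_num) this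
      omega
    have hqb : ¬ q ∣ b := by
      intro hd
      have : (q : ℤ) ∣ t - 10 := hcb ▸ Int.natCast_dvd_natCast.mpr hd
      have h2 : (q : ℤ) ∣ 8 := by
        have := dvd_sub hqmZ this
        simpa using this
      have : q ∣ 8 := by exact_mod_cast h2
      have := Nat.le_of_dvd (by norm_num) this
      interval_cases q <;> omega
    -- exponent of q in the product equals that in m, which is odd
    have hval : padicValNat q (a * m * b) = padicValNat q m := by
      rw [padicValNat.mul (mul_ne_zero ha0 hm0) hb0, padicValNat.mul ha0 hm0,
        padicValNat.eq_zero_of_not_dvd hqa, padicValNat.eq_zero_of_not_dvd hqb]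
      omega
    have heven : Even (padicValNat q (a * m * b)) :=
      Nat.eq_sq_add_sq_iff.mp ⟨x.natAbs, y.natAbs, hn⟩ q
        (Nat.mem_primeFactors.mpr ⟨hqp, dvd_mul_of_dvd_left (dvd_mul_of_dvd_right hqm a) b,
          mul_ne_zero (mul_ne_zero ha0 hm0) hb0⟩) hq4
    rw [hval] at heven
    exact (Nat.not_even_iff_odd.mpr hqodd) heven
  · -- negative case: product is negative
    have h1 : t * (t - 2) > 0 := mul_pos_of_neg_of_neg (by omega) (by omega)
    have h2 : t * (t - 2) * (t - 10) < 0 := mul_neg_of_pos_of_neg h1 (by omega)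
    linarith
end
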